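/- Let σ₁: (Γ¹, Γ_B) → R^± and σ₂: (Γ², Γ_B) → R^± be strong formal subdivisions with boundary sharing the same boundary σ_B: Γ_B → R^−, where Γ¹ and Γ² are lower Eulerian posets and R is an Eulerian poset. Then the local h-polynomial of the agglutination σ₁ ♯_{σ_B} σ₂: Γ¹ ♯_{Γ_B} Γ² → R satisfies ℓ_R(Γ¹ ♯_{Γ_B} Γ²; t) = ℓ_{R^±}(Γ¹; t) + ℓ_{R^±}(Γ²; t) + (t + 1) ℓ_{R^−}(Γ_B; t), where ℓ_{R^±}(Γ^i; t) is the local h-polynomial of σ_i and ℓ_{R^−}(Γ_B; t) that of σ_B: Γ_B → R^− (R^− being Eulerian, isomorphic to R). -/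

import Mathlib

attribute [local instance] Classical.propDecidable

noncomputable section

/-- The finite subposet `S` (with induced order) is ranked with rank function `ρ`:
ranks strictly increase, and covering relations (within `S`) increase rank by one. -/
def IsRankedOn {α : Type*} [PartialOrder α] (S : Finset α) (ρ : α → ℕ) : Prop :=
  (∀ x ∈ S, ∀ y ∈ S, x < y → ρ x < ρ y) ∧
  (∀ x ∈ S, ∀ y ∈ S, x < y → (∀ z ∈ S, ¬ (x < z ∧ z < y)) → ρ y = ρ x + 1)

/-- The finite subposet `S` is locally Eulerian: it is ranked and every nontrivial
interval `[x,y]` in `S` has equally many elements of even and of odd rank. -/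
def IsLocallyEulerianOn {α : Type*} [PartialOrder α] (S : Finset α) (ρ : α → ℕ) : Prop :=
  IsRankedOn S ρ ∧
  ∀ x ∈ S, ∀ y ∈ S, x < y →
    (S.filter (fun z => x ≤ z ∧ z ≤ y ∧ Even (ρ z))).card =
    (S.filter (fun z => x ≤ z ∧ z ≤ y ∧ ¬ Even (ρ z))).card

/-- Lower Eulerian: locally Eulerian with a minimum. -/
def IsLowerEulerianOn {α : Type*} [PartialOrder α] (S : Finset α) (ρ : α → ℕ) : Prop :=
  IsLocallyEulerianOn S ρ ∧ ∃ b ∈ S, ∀ x ∈ S, b ≤ x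

/-- Eulerian: lower Eulerian with a maximum. -/
def IsEulerianOn {α : Type*} [PartialOrder α] (S : Finset α) (ρ : α → ℕ) : Prop :=
  IsLowerEulerianOn S ρ ∧ ∃ t ∈ S, ∀ x ∈ S, x ≤ t

/-- `G` is a system of `g`-polynomials for the intervals of the finite poset `S` with rank
function `ρ`: `G x y = g([x,y]; t)`.  Defining property: `G x x = 1` and, for `x < y` of
rank difference `r`, `deg (G x y) < r/2` and
`t^r · (G x y)(1/t) = Σ_{x ≤ z ≤ y} (G x z) · (t−1)^{r − (ρ z − ρ x)}`
(the left-hand side being `Polynomial.reflect r (G x y)`). -/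
def IsGSystemOn {α : Type*} [PartialOrder α] (S : Finset α) (ρ : α → ℕ)
    (G : α → α → Polynomial ℤ) : Prop :=
  (∀ x ∈ S, G x x = 1) ∧
  ∀ x ∈ S, ∀ y ∈ S, x < y →
    2 * (G x y).natDegree < ρ y - ρ x ∧
    Polynomial.reflect (ρ y - ρ x) (G x y) =
      ∑ z ∈ S.filter (fun z => x ≤ z ∧ z ≤ y), G x z * (Polynomial.X - 1) ^ (ρ y - ρ z)

/-- `G` is a system of `g`-polynomials of the *dual* intervals of `S`: `G x y = g([x,y]^*; t)`. -/
def IsDualGSystemOn {α : Type*} [PartialOrder α] (S : Finset α) (ρ : α → ℕ)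
    (G : α → α → Polynomial ℤ) : Prop :=
  (∀ x ∈ S, G x x = 1) ∧
  ∀ x ∈ S, ∀ y ∈ S, x < y →
    2 * (G x y).natDegree < ρ y - ρ x ∧
    Polynomial.reflect (ρ y - ρ x) (G x y) =
      ∑ z ∈ S.filter (fun z => x ≤ z ∧ z ≤ y), G z y * (Polynomial.X - 1) ^ (ρ z - ρ x)

/-- The `h`-polynomial of a finite lower Eulerian poset `S` with minimum `b`, rank function
`ρ` and `g`-polynomial system `G`: it is defined by
`t^n · h(S;1/t) = Σ_{x ∈ S} g([b,x];t) (t−1)^{n−ρ(b,x)}` where `n = rk S`; equivalently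
`h(S;t) = reflect n (Σ_{x ∈ S} G b x · (t−1)^{sup ρ − ρ x})`, with `n = S.sup ρ − ρ b`. -/
def hPoly {α : Type*} [PartialOrder α] (ρ : α → ℕ) (G : α → α → Polynomial ℤ)
    (S : Finset α) (b : α) : Polynomial ℤ :=
  Polynomial.reflect (S.sup ρ - ρ b)
    (∑ x ∈ S, G b x * (Polynomial.X - 1) ^ (S.sup ρ - ρ x))

/-- The relative local `h`-polynomial `ℓ_B(Γ, x, y; t)` of an order-preserving map
`σ : Γ → B` (with `Γ` realized as the finite poset `S` in `α`, and `B` as the finite poset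
`T` in `β`), for `y ∈ Γ` and `x ∈ B` with `σ y ≤ x`:
`ℓ_B(Γ, x, y; t) = Σ_{σ(y) ≤ x' ≤ x} h((Γ_{≥y})_{x'}; t) · (−1)^{ρ(x',x)} · g([x',x]^*; t)`,
where `(Γ_{≥y})_{x'} = {y' ∈ Γ : y ≤ y', σ y' ≤ x'}`, `ρA, G` give the `h`-polynomials on
the source side, and `G'` is a system of `g`-polynomials of dual intervals of `T`. -/
def relLocH {α β : Type*} [PartialOrder α] [PartialOrder β]
    (ρA : α → ℕ) (G : α → α → Polynomial ℤ) (σ : α → β) (S : Finset α) (y : α)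
    (ρB : β → ℕ) (G' : β → β → Polynomial ℤ) (T : Finset β) (x : β) : Polynomial ℤ :=
  ∑ x' ∈ T.filter (fun x' => σ y ≤ x' ∧ x' ≤ x),
    (-1 : Polynomial ℤ) ^ (ρB x - ρB x') *
      hPoly ρA G (S.filter (fun y' => y ≤ y' ∧ σ y' ≤ x')) y * G' x' x

/-- `σ` is a strong formal subdivision from the finite poset `S ⊆ α` (rank function `ρA`)
to the finite poset `T ⊆ β` (rank function `ρB`): it is order preserving, rank increasing,
strongly surjective, and satisfies the Euler-characteristic condition
`Σ_{y' ≥ y, σ y' = x} (−1)^{ρB x − ρA y'} = 1` whenever `y ∈ S`, `x ∈ T`, `σ y ≤ x`. -/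
def IsSFSOn {α β : Type*} [PartialOrder α] [PartialOrder β]
    (S : Finset α) (ρA : α → ℕ) (σ : α → β) (T : Finset β) (ρB : β → ℕ) : Prop :=
  (∀ y ∈ S, σ y ∈ T) ∧
  (∀ y ∈ S, ∀ y' ∈ S, y ≤ y' → σ y ≤ σ y') ∧
  (∀ y ∈ S, ρA y ≤ ρB (σ y)) ∧
  (∀ x ∈ T, ∃ y ∈ S, σ y = x) ∧
  (∀ y ∈ S, ∀ x ∈ T, σ y ≤ x → ∃ y' ∈ S, y ≤ y' ∧ ρA y' = ρB x ∧ σ y' = x) ∧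
  (∀ y ∈ S, ∀ x ∈ T, σ y ≤ x →
    ∑ y' ∈ S.filter (fun y' => y ≤ y' ∧ σ y' = x), (-1 : ℤ) ^ (ρB x - ρA y') = 1)

open Polynomial in

lemma reflect_fix_zero {m : ℕ} {D : Polynomial ℤ} (hdeg : 2 * D.natDegree < m)
    (hfix : Polynomial.reflect m D = D) : D = 0 := by
  by_contra hD
  have hlead : D.coeff D.natDegree ≠ 0 := Polynomial.leadingCoeff_ne_zero.mpr hD
  have h1 : D.coeff D.natDegree = D.coeff (m - D.natDegree) := by
    have h0 : (Polynomial.reflect m D).coeff D.natDegree = D.coeff (m - D.natDegree) := by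
      rw [Polynomial.coeff_reflect, Polynomial.revAt_le (by omega : D.natDegree ≤ m)]
    rw [hfix] at h0; exact h0
  have h2 : D.coeff (m - D.natDegree) = 0 :=
    Polynomial.coeff_eq_zero_of_natDegree_lt (by omega)
  exact hlead (h1.trans h2)

lemma reflect_one_one : Polynomial.reflect 1 (1 : Polynomial ℤ) = Polynomial.X := by
  have h : (1 : Polynomial ℤ) = Polynomial.C 1 * Polynomial.X ^ 0 := by simp
  rw [h, Polynomial.reflect_C_mul_X_pow]
  simp

lemma reflect_zero_one : Polynomial.reflect 0 (1 : Polynomial ℤ) = 1 := by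
  have h : (1 : Polynomial ℤ) = Polynomial.C 1 * Polynomial.X ^ 0 := by simp
  rw [h, Polynomial.reflect_C_mul_X_pow]
  simp

lemma reflect_one_X : Polynomial.reflect 1 (Polynomial.X : Polynomial ℤ) = 1 := by
  have h : (Polynomial.X : Polynomial ℤ) = Polynomial.C 1 * Polynomial.X ^ 1 := by simp
  rw [h, Polynomial.reflect_C_mul_X_pow]
  rw [Polynomial.revAt_le (le_refl 1)]
  simp

lemma reflect_one_X_sub_one :
    Polynomial.reflect 1 (Polynomial.X - 1 : Polynomial ℤ) = 1 - Polynomial.X := by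
  rw [Polynomial.reflect_sub, reflect_one_X, reflect_one_one]

lemma natDegree_X_sub_one : (Polynomial.X - 1 : Polynomial ℤ).natDegree = 1 := by
  simpa using Polynomial.natDegree_X_sub_C (1 : ℤ)

lemma reflect_succ_X_mul {N : ℕ} {Q : Polynomial ℤ} (h : Q.natDegree ≤ N) :
    Polynomial.reflect (1 + N) Q = Polynomial.X * Polynomial.reflect N Q := by
  have h2 := Polynomial.reflect_mul (f := (1 : Polynomial ℤ)) (g := Q)
    (F := 1) (G := N) (by simp) h
  simpa [reflect_one_one] using h2

lemma reflect_sum {ι : Type*} (s : Finset ι) (f : ι → Polynomial ℤ) (N : ℕ) :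
    Polynomial.reflect N (∑ i ∈ s, f i) = ∑ i ∈ s, Polynomial.reflect N (f i) := by
  classical
  induction s using Finset.induction_on with
  | empty => simp
  | insert _ _ h ih => rw [Finset.sum_insert h, Finset.sum_insert h, Polynomial.reflect_add, ih]


lemma key_g {β : Type*} [PartialOrder β] (R : Finset β) (ρR : β → ℕ)
    (hmono : ∀ x ∈ R, ∀ y ∈ R, x < y → ρR x < ρR y)
    (t₀ : β) (ht₀ : t₀ ∈ R)
    (G'R : β → β → Polynomial ℤ) (hG'R : IsDualGSystemOn R ρR G'R)
    (G'pm : β × Bool → β × Bool → Polynomial ℤ)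
    (hG'pm : IsDualGSystemOn (R ×ˢ (Finset.univ : Finset Bool))
      (fun p => ρR p.1 + p.2.toNat) G'pm) :
    ∀ x ∈ R, x ≤ t₀ →
      G'pm (x, true) (t₀, true) = G'R x t₀ ∧ G'pm (x, false) (t₀, true) = G'R x t₀ := by
  have hmle : ∀ x ∈ R, ∀ y ∈ R, x ≤ y → ρR x ≤ ρR y := by
    intro x hx y hy hxy
    rcases eq_or_lt_of_le hxy with rfl | h
    · exact le_rfl
    · exact (hmono x hx y hy h).le
  suffices H : ∀ k, ∀ x ∈ R, x ≤ t₀ → ρR t₀ - ρR x = k →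
      G'pm (x, true) (t₀, true) = G'R x t₀ ∧ G'pm (x, false) (t₀, true) = G'R x t₀ by
    intro x hx hxt; exact H _ x hx hxt rfl
  intro k
  induction k using Nat.strong_induction_on with
  | _ k IH =>
  intro x hx hxt hk
  have hxT : ((x, true) : β × Bool) ∈ R ×ˢ (Finset.univ : Finset Bool) :=
    Finset.mem_product.mpr ⟨hx, Finset.mem_univ _⟩
  have hxF : ((x, false) : β × Bool) ∈ R ×ˢ (Finset.univ : Finset Bool) :=
    Finset.mem_product.mpr ⟨hx, Finset.mem_univ _⟩
  have htT : ((t₀, true) : β × Bool) ∈ R ×ˢ (Finset.univ : Finset Bool) :=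
    Finset.mem_product.mpr ⟨ht₀, Finset.mem_univ _⟩
  have hρxt : ρR x ≤ ρR t₀ := hmle x hx t₀ ht₀ hxt
  have hIHsmall : ∀ z ∈ R, x < z → z ≤ t₀ →
      G'pm (z, true) (t₀, true) = G'R z t₀ ∧ G'pm (z, false) (t₀, true) = G'R z t₀ := by
    intro z hz hxz hzt
    have h1 := hmono x hx z hz hxz
    have h2 := hmle z hz t₀ ht₀ hzt
    exact IH _ (by omega) z hz hzt rfl
  have hble : ∀ ε : Bool, ((true : Bool) ≤ ε ↔ ε = true) := by decide
  -- Part (A)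
  have hA : G'pm (x, true) (t₀, true) = G'R x t₀ := by
    rcases eq_or_lt_of_le hxt with rfl | hlt
    · rw [hG'pm.1 _ hxT, hG'R.1 _ hx]
    · have hltpm : ((x, true) : β × Bool) < (t₀, true) :=
        Prod.mk_lt_mk.mpr (Or.inl ⟨hlt, le_rfl⟩)
      obtain ⟨hdegP, hrelP⟩ := hG'pm.2 (x, true) hxT (t₀, true) htT hltpm
      obtain ⟨hdegQ, hrelQ⟩ := hG'R.2 x hx t₀ ht₀ hlt
      rw [Finset.sum_filter] at hrelP hrelQ
      rw [Finset.sum_product] at hrelP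
      simp only [Fintype.sum_bool, Prod.mk_le_mk, Bool.toNat_true, Bool.toNat_false,
        Nat.add_sub_add_right, le_refl, and_true, Bool.le_true, hble, Bool.false_le,
        if_false, add_zero, Bool.false_eq_true, false_and, and_false, if_neg,
        not_false_eq_true] at hrelP hdegP
      have hsub : Polynomial.reflect (ρR t₀ - ρR x)
          (G'pm (x, true) (t₀, true) - G'R x t₀)
          = G'pm (x, true) (t₀, true) - G'R x t₀ := by
        rw [Polynomial.reflect_sub, hrelP, hrelQ, ← Finset.sum_sub_distrib]
        refine (Finset.sum_eq_single_of_mem x hx ?_).trans ?_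
        · intro z hz hne
          by_cases hc : x ≤ z ∧ z ≤ t₀
          · rw [if_pos hc, if_pos hc,
              (hIHsmall z hz (lt_of_le_of_ne hc.1 (Ne.symm hne)) hc.2).1, sub_self]
          · rw [if_neg hc, if_neg hc, sub_self]
        · rw [if_pos ⟨le_rfl, hxt⟩, if_pos ⟨le_rfl, hxt⟩, Nat.sub_self, pow_zero,
            mul_one, mul_one]
      have hdeg : 2 * (G'pm (x, true) (t₀, true) - G'R x t₀).natDegree < ρR t₀ - ρR x := by
        have hle := Polynomial.natDegree_sub_le (G'pm (x, true) (t₀, true)) (G'R x t₀)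
        rcases max_cases (G'pm (x, true) (t₀, true)).natDegree (G'R x t₀).natDegree with
          ⟨he, _⟩ | ⟨he, _⟩ <;> omega
      exact sub_eq_zero.mp (reflect_fix_zero hdeg hsub)
  -- Part (C)
  have hAll : ∀ z ∈ R, x ≤ z → z ≤ t₀ → G'pm (z, true) (t₀, true) = G'R z t₀ := by
    intro z hz hxz hzt
    rcases eq_or_lt_of_le hxz with rfl | h
    · exact hA
    · exact (hIHsmall z hz h hzt).1
  refine ⟨hA, ?_⟩
  have hltpm : ((x, false) : β × Bool) < (t₀, true) := by
    refine Prod.mk_lt_mk.mpr (Or.inr ⟨hxt, ?_⟩)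
    exact Bool.false_lt_true
  obtain ⟨hdegP, hrelP⟩ := hG'pm.2 (x, false) hxF (t₀, true) htT hltpm
  rw [Finset.sum_filter] at hrelP
  rw [Finset.sum_product] at hrelP
  have hΔ : ρR t₀ + 1 - ρR x = (ρR t₀ - ρR x) + 1 := by omega
  simp only [Fintype.sum_bool, Prod.mk_le_mk, Bool.toNat_true, Bool.toNat_false,
    Nat.add_zero, le_refl, and_true, Bool.le_true, Bool.false_le, true_and, hΔ]
    at hrelP hdegP
  set r := ρR t₀ - ρR x with hr
  set P := G'pm (x, false) (t₀, true) with hP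
  set Q := G'R x t₀ with hQ
  set RQ := ∑ z ∈ R, (if x ≤ z ∧ z ≤ t₀ then G'R z t₀ * (Polynomial.X - 1) ^ (ρR z - ρR x)
    else 0) with hRQdef
  have hdegQ2 : 2 * Q.natDegree ≤ r := by
    rcases eq_or_lt_of_le hxt with heq | hlt
    · subst heq
      rw [hQ, hG'R.1 _ hx]
      simp
    · exact (hG'R.2 x hx t₀ ht₀ hlt).1.le
  have hRQ : RQ = Polynomial.reflect r Q := by
    rcases eq_or_lt_of_le hxt with heq | hlt
    · subst heq
      have hr0 : r = 0 := by rw [hr]; omega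
      rw [hRQdef]
      refine ((Finset.sum_eq_single_of_mem x hx ?_).trans ?_)
      · intro z hz hne
        rw [if_neg]
        rintro ⟨h1, h2⟩
        exact hne (le_antisymm h2 h1)
      · rw [if_pos ⟨le_rfl, le_rfl⟩, hQ, hG'R.1 _ hx, Nat.sub_self, pow_zero, mul_one,
          hr0, reflect_zero_one]
    · obtain ⟨_, hrelQ⟩ := hG'R.2 x hx t₀ ht₀ hlt
      rw [Finset.sum_filter] at hrelQ
      rw [hRQdef, ← hrelQ, hQ, hr]
  have h1 : ∑ z ∈ R, (if x ≤ z ∧ z ≤ t₀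
        then G'pm (z, true) (t₀, true) * (Polynomial.X - 1) ^ (ρR z + 1 - ρR x) else 0)
      = (Polynomial.X - 1) * RQ := by
    rw [hRQdef, Finset.mul_sum]
    refine Finset.sum_congr rfl fun z hz => ?_
    by_cases hc : x ≤ z ∧ z ≤ t₀
    · rw [if_pos hc, if_pos hc, hAll z hz hc.1 hc.2]
      have he : ρR z + 1 - ρR x = (ρR z - ρR x) + 1 := by
        have := hmle x hx z hz hc.1; omega
      rw [he, pow_succ]; ring
    · rw [if_neg hc, if_neg hc, mul_zero]
  have h2 : ∑ z ∈ R, (if x ≤ z ∧ z ≤ t₀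
        then G'pm (z, false) (t₀, true) * (Polynomial.X - 1) ^ (ρR z - ρR x) else 0)
      = RQ + (P - Q) := by
    have hc : ∀ z ∈ R, (if x ≤ z ∧ z ≤ t₀
          then G'pm (z, false) (t₀, true) * (Polynomial.X - 1) ^ (ρR z - ρR x) else 0)
        = (if x ≤ z ∧ z ≤ t₀ then G'R z t₀ * (Polynomial.X - 1) ^ (ρR z - ρR x) else 0)
          + (if z = x then P - Q else 0) := by
      intro z hz
      by_cases hzx : z = x
      · subst hzx
        rw [if_pos ⟨le_rfl, hxt⟩, if_pos ⟨le_rfl, hxt⟩, if_pos rfl, Nat.sub_self,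
          pow_zero, mul_one, mul_one, hP, hQ]
        ring
      · rw [if_neg hzx, add_zero]
        by_cases hcc : x ≤ z ∧ z ≤ t₀
        · rw [if_pos hcc, if_pos hcc,
            (hIHsmall z hz (lt_of_le_of_ne hcc.1 (Ne.symm hzx)) hcc.2).2]
        · rw [if_neg hcc, if_neg hcc]
    rw [Finset.sum_congr rfl hc, Finset.sum_add_distrib,
      Finset.sum_ite_eq' R x (fun _ => P - Q), if_pos hx, hRQdef]
  have hreflP : Polynomial.reflect (r + 1) P = Polynomial.X * RQ + (P - Q) := by
    rw [hP, hrelP, Finset.sum_add_distrib, h1, h2]; ring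
  have hreflQ : Polynomial.reflect (r + 1) Q = Polynomial.X * RQ := by
    have hcomm : r + 1 = 1 + r := by omega
    rw [hcomm, reflect_succ_X_mul (by omega : Q.natDegree ≤ r), hRQ]
  have hsub : Polynomial.reflect (r + 1) (P - Q) = P - Q := by
    rw [Polynomial.reflect_sub, hreflP, hreflQ]; ring
  have hdeg : 2 * (P - Q).natDegree < r + 1 := by
    have hle := Polynomial.natDegree_sub_le P Q
    rcases max_cases P.natDegree Q.natDegree with ⟨he, _⟩ | ⟨he, _⟩ <;> omega
  exact sub_eq_zero.mp (reflect_fix_zero hdeg hsub)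


/-- let `σ₁ : (Γ¹, Γ_B) → R^±` and `σ₂ : (Γ², Γ_B) → R^±` be strong formal
subdivisions with boundary sharing the same boundary `σ_B : Γ_B → R⁻`, with `Γ¹, Γ²`
finite lower Eulerian posets and `R` a finite Eulerian poset.  Here `Γ_B = Γ¹ ∩ Γ²` is a
lower set of each `Γⁱ`, no element of `Γ¹ ∖ Γ_B` is comparable to one of `Γ² ∖ Γ_B` (so
`Γ¹ ∪ Γ²` realizes the agglutination `Γ¹ ♯_{Γ_B} Γ²`), `R^±` is realized as
`R ×ˢ Bool` with product order and rank `ρ^±(r, ε) = ρ_R r + ε` (with `(r, false) = φ⁻ r`),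
and `R⁻ ≅ R`.  The agglutinated map `σ₁ ♯_{σ_B} σ₂ : Γ¹ ♯_{Γ_B} Γ² → R` is
`y ↦ (σᵢ y).1`.  Then the local `h`-polynomials satisfy
`ℓ_R(Γ¹ ♯_{Γ_B} Γ²; t) = ℓ_{R^±}(Γ¹; t) + ℓ_{R^±}(Γ²; t) + (t + 1) ℓ_{R⁻}(Γ_B; t)`. -/
theorem locH_agglutination {α β : Type*} [PartialOrder α] [PartialOrder β]
    (ρA : α → ℕ) (ρR : β → ℕ) (Γ₁ Γ₂ : Finset α)
    (hlow₁ : ∀ x ∈ Γ₁, ∀ y ∈ Γ₁ ∩ Γ₂, x ≤ y → x ∈ Γ₁ ∩ Γ₂)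
    (hlow₂ : ∀ x ∈ Γ₂, ∀ y ∈ Γ₁ ∩ Γ₂, x ≤ y → x ∈ Γ₁ ∩ Γ₂)
    (hincomp : ∀ x ∈ Γ₁ \ (Γ₁ ∩ Γ₂), ∀ y ∈ Γ₂ \ (Γ₁ ∩ Γ₂), ¬ x ≤ y ∧ ¬ y ≤ x)
    (hLE₁ : IsLowerEulerianOn Γ₁ ρA) (hLE₂ : IsLowerEulerianOn Γ₂ ρA)
    (hrk : Γ₁.sup ρA = Γ₂.sup ρA) (hrkB : (Γ₁ ∩ Γ₂).sup ρA + 1 = Γ₁.sup ρA)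
    (b : α) (hbB : b ∈ Γ₁ ∩ Γ₂) (hb : ∀ x ∈ Γ₁ ∪ Γ₂, b ≤ x)
    (R : Finset β) (hR : IsEulerianOn R ρR)
    (t₀ : β) (ht₀ : t₀ ∈ R) (htop : ∀ x ∈ R, x ≤ t₀)
    (σ₁ σ₂ : α → β × Bool)
    (hagree : ∀ y ∈ Γ₁ ∩ Γ₂, σ₁ y = σ₂ y)
    (hbd : ∀ y ∈ Γ₁ ∩ Γ₂, (σ₁ y).2 = false)
    (hin₁ : ∀ y ∈ Γ₁ \ (Γ₁ ∩ Γ₂), (σ₁ y).2 = true)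
    (hin₂ : ∀ y ∈ Γ₂ \ (Γ₁ ∩ Γ₂), (σ₂ y).2 = true)
    (hSFS₁ : IsSFSOn Γ₁ ρA σ₁ (R ×ˢ (Finset.univ : Finset Bool))
      (fun p => ρR p.1 + p.2.toNat))
    (hSFS₂ : IsSFSOn Γ₂ ρA σ₂ (R ×ˢ (Finset.univ : Finset Bool))
      (fun p => ρR p.1 + p.2.toNat))
    (hSFSB : IsSFSOn (Γ₁ ∩ Γ₂) ρA (fun y => (σ₁ y).1) R ρR)
    (G : α → α → Polynomial ℤ) (hG : IsGSystemOn (Γ₁ ∪ Γ₂) ρA G)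
    (G'R : β → β → Polynomial ℤ) (hG'R : IsDualGSystemOn R ρR G'R)
    (G'pm : β × Bool → β × Bool → Polynomial ℤ)
    (hG'pm : IsDualGSystemOn (R ×ˢ (Finset.univ : Finset Bool))
      (fun p => ρR p.1 + p.2.toNat) G'pm) :
    relLocH ρA G (fun y => if y ∈ Γ₁ then (σ₁ y).1 else (σ₂ y).1) (Γ₁ ∪ Γ₂) b
        ρR G'R R t₀
      = relLocH ρA G σ₁ Γ₁ b (fun p => ρR p.1 + p.2.toNat) G'pm
          (R ×ˢ (Finset.univ : Finset Bool)) (t₀, true)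
        + relLocH ρA G σ₂ Γ₂ b (fun p => ρR p.1 + p.2.toNat) G'pm
          (R ×ˢ (Finset.univ : Finset Bool)) (t₀, true)
        + (Polynomial.X + 1) * relLocH ρA G (fun y => (σ₁ y).1) (Γ₁ ∩ Γ₂) b
            ρR G'R R t₀ := by
  classical
  obtain ⟨hbΓ₁, hbΓ₂⟩ := Finset.mem_inter.mp hbB
  have hmonoR : ∀ x ∈ R, ∀ y ∈ R, x < y → ρR x < ρR y := hR.1.1.1.1
  have hmleR : ∀ x ∈ R, ∀ y ∈ R, x ≤ y → ρR x ≤ ρR y := by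
    intro x hx y hy h
    rcases eq_or_lt_of_le h with rfl | h'
    · exact le_rfl
    · exact (hmonoR x hx y hy h').le
  have hmonoA₁ : ∀ x ∈ Γ₁, ∀ y ∈ Γ₁, x < y → ρA x < ρA y := hLE₁.1.1.1
  have hkey := key_g R ρR hmonoR t₀ ht₀ G'R hG'R G'pm hG'pm
  have hbdb : (σ₁ b).2 = false := hbd b hbB
  have hσ1bR : (σ₁ b).1 ∈ R := (Finset.mem_product.mp (hSFS₁.1 b hbΓ₁)).1
  have htn : ∀ c : Bool, c.toNat ≤ 1 := by decide
  have hlefalse : ∀ c : Bool, c ≤ false ↔ c = false := by decide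
  simp only [relLocH]
  simp only [Finset.sum_filter, Finset.sum_product, Fintype.sum_bool]
  simp only [hbΓ₁, if_true, ← hagree b hbB, Prod.le_def, Prod.mk_le_mk, hbdb,
    Bool.false_le, Bool.le_true, le_refl, and_true, true_and, Bool.toNat_true,
    Bool.toNat_false, Nat.add_sub_add_right, Nat.add_zero]
  rw [Finset.mul_sum, ← Finset.sum_add_distrib, ← Finset.sum_add_distrib]
  refine Finset.sum_congr rfl fun x hx => ?_
  by_cases hc : (σ₁ b).1 ≤ x ∧ x ≤ t₀
  swap
  · simp [hc]
  rw [if_pos hc, if_pos hc, if_pos hc, if_pos hc, if_pos hc, if_pos hc]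
  -- canonical sets
  set AB := Finset.filter (fun y' => b ≤ y' ∧ (σ₁ y').1 ≤ x) (Γ₁ ∩ Γ₂) with hABdef
  set A1 := Finset.filter (fun y' => b ≤ y' ∧ (σ₁ y').1 ≤ x) Γ₁ with hA1def
  set A2 := Finset.filter (fun y' => b ≤ y' ∧ (σ₂ y').1 ≤ x) Γ₂ with hA2def
  set B1 := Finset.filter (fun y' => b ≤ y' ∧ (σ₁ y').1 ≤ x ∧ (σ₁ y').2 ≤ false) Γ₁
    with hB1def
  set B2 := Finset.filter (fun y' => b ≤ y' ∧ (σ₂ y').1 ≤ x ∧ (σ₂ y').2 ≤ false) Γ₂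
    with hB2def
  set F := Finset.filter
    (fun y' => b ≤ y' ∧ (if y' ∈ Γ₁ then (σ₁ y').1 else (σ₂ y').1) ≤ x) (Γ₁ ∪ Γ₂)
    with hFdef
  -- boundary identifications
  have eB1 : B1 = AB := by
    ext y
    simp only [hB1def, hABdef, Finset.mem_filter, Finset.mem_inter]
    constructor
    · rintro ⟨hy1, hby, h1, h2⟩
      have hf : (σ₁ y).2 = false := (hlefalse _).mp h2
      have hyB : y ∈ Γ₁ ∩ Γ₂ := by
        by_contra hniB
        have := hin₁ y (Finset.mem_sdiff.mpr ⟨hy1, hniB⟩)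
        rw [this] at hf
        exact absurd hf (by decide)
      exact ⟨Finset.mem_inter.mp hyB, hby, h1⟩
    · rintro ⟨⟨hy1, hy2⟩, hby, h1⟩
      refine ⟨hy1, hby, h1, ?_⟩
      rw [hbd y (Finset.mem_inter.mpr ⟨hy1, hy2⟩)]
  have eB2 : B2 = AB := by
    ext y
    simp only [hB2def, hABdef, Finset.mem_filter, Finset.mem_inter]
    constructor
    · rintro ⟨hy2, hby, h1, h2⟩
      have hf : (σ₂ y).2 = false := (hlefalse _).mp h2
      have hyB : y ∈ Γ₁ ∩ Γ₂ := by
        by_contra hniB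
        have := hin₂ y (Finset.mem_sdiff.mpr ⟨hy2, hniB⟩)
        rw [this] at hf
        exact absurd hf (by decide)
      refine ⟨Finset.mem_inter.mp hyB, hby, ?_⟩
      rw [hagree y hyB]; exact h1
    · rintro ⟨⟨hy1, hy2⟩, hby, h1⟩
      have hyB : y ∈ Γ₁ ∩ Γ₂ := Finset.mem_inter.mpr ⟨hy1, hy2⟩
      refine ⟨hy2, hby, ?_, ?_⟩
      · rw [← hagree y hyB]; exact h1
      · rw [← hagree y hyB, hbd y hyB]
  -- decomposition of the agglutinated fiber
  have hf3 : F = A1 ∪ A2 := by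
    ext y
    simp only [hFdef, hA1def, hA2def, Finset.mem_filter, Finset.mem_union]
    constructor
    · rintro ⟨hyU, hby, hcond⟩
      by_cases hy1 : y ∈ Γ₁
      · left; exact ⟨hy1, hby, by rwa [if_pos hy1] at hcond⟩
      · rcases hyU with hy1' | hy2
        · exact absurd hy1' hy1
        · right; exact ⟨hy2, hby, by rwa [if_neg hy1] at hcond⟩
    · rintro (⟨hy1, hby, hcond⟩ | ⟨hy2, hby, hcond⟩)
      · exact ⟨Or.inl hy1, hby, by rwa [if_pos hy1]⟩
      · refine ⟨Or.inr hy2, hby, ?_⟩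
        by_cases hy1 : y ∈ Γ₁
        · rw [if_pos hy1, hagree y (Finset.mem_inter.mpr ⟨hy1, hy2⟩)]; exact hcond
        · rw [if_neg hy1]; exact hcond
  have hf4 : A1 ∩ A2 = AB := by
    ext y
    simp only [hA1def, hA2def, hABdef, Finset.mem_inter, Finset.mem_filter]
    constructor
    · rintro ⟨⟨hy1, hby, h1⟩, hy2, _, _⟩
      exact ⟨⟨hy1, hy2⟩, hby, h1⟩
    · rintro ⟨⟨hy1, hy2⟩, hby, h1⟩
      have hyB : y ∈ Γ₁ ∩ Γ₂ := Finset.mem_inter.mpr ⟨hy1, hy2⟩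
      exact ⟨⟨hy1, hby, h1⟩, hy2, hby, by rw [← hagree y hyB]; exact h1⟩
  -- rank bounds
  have hbA1 : ∀ y ∈ A1, ρA y ≤ ρR x + 1 := by
    intro y hy
    obtain ⟨hyΓ, hby, hle1⟩ := Finset.mem_filter.mp hy
    have h1 : ρA y ≤ ρR (σ₁ y).1 + ((σ₁ y).2).toNat := by simpa using hSFS₁.2.2.1 y hyΓ
    have h2 : ρR (σ₁ y).1 ≤ ρR x :=
      hmleR _ (Finset.mem_product.mp (hSFS₁.1 y hyΓ)).1 x hx hle1
    have h3 := htn (σ₁ y).2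
    omega
  have hbA2 : ∀ y ∈ A2, ρA y ≤ ρR x + 1 := by
    intro y hy
    obtain ⟨hyΓ, hby, hle1⟩ := Finset.mem_filter.mp hy
    have h1 : ρA y ≤ ρR (σ₂ y).1 + ((σ₂ y).2).toNat := by simpa using hSFS₂.2.2.1 y hyΓ
    have h2 : ρR (σ₂ y).1 ≤ ρR x :=
      hmleR _ (Finset.mem_product.mp (hSFS₂.1 y hyΓ)).1 x hx hle1
    have h3 := htn (σ₂ y).2
    omega
  have hbAB : ∀ y ∈ AB, ρA y ≤ ρR x := by
    intro y hy
    obtain ⟨hyB, hby, hle1⟩ := Finset.mem_filter.mp hy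
    have h1 : ρA y ≤ ρR (σ₁ y).1 := by simpa using hSFSB.2.2.1 y hyB
    have h2 : ρR (σ₁ y).1 ≤ ρR x := hmleR _ (hSFSB.1 y hyB) x hx hle1
    omega
  have hABρb : ∀ y ∈ AB, ρA b ≤ ρA y := by
    intro y hy
    obtain ⟨hyB, hby, _⟩ := Finset.mem_filter.mp hy
    rcases eq_or_lt_of_le hby with rfl | hlt
    · exact le_rfl
    · exact (hmonoA₁ b hbΓ₁ y (Finset.mem_inter.mp hyB).1 hlt).le
  have hρbx : ρA b ≤ ρR x := by
    have h1 : ρA b ≤ ρR (σ₁ b).1 + ((σ₁ b).2).toNat := by simpa using hSFS₁.2.2.1 b hbΓ₁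
    rw [hbdb] at h1
    have h2 : ρR (σ₁ b).1 ≤ ρR x := hmleR _ hσ1bR x hx hc.1
    simp only [Bool.toNat_false, Nat.add_zero] at h1
    omega
  -- attainment
  obtain ⟨w₁, hw₁Γ, hbw₁, hρw₁, hσw₁⟩ := hSFS₁.2.2.2.2.1 b hbΓ₁ (x, true)
    (Finset.mem_product.mpr ⟨hx, Finset.mem_univ _⟩)
    (Prod.le_def.mpr ⟨hc.1, by rw [hbdb]; exact Bool.false_le _⟩)
  have hρw₁' : ρA w₁ = ρR x + 1 := by simpa using hρw₁
  have hw₁A1 : w₁ ∈ A1 := by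
    refine Finset.mem_filter.mpr ⟨hw₁Γ, hbw₁, ?_⟩
    rw [hσw₁]
  have hσ2b : σ₂ b = σ₁ b := (hagree b hbB).symm
  obtain ⟨w₂, hw₂Γ, hbw₂, hρw₂, hσw₂⟩ := hSFS₂.2.2.2.2.1 b hbΓ₂ (x, true)
    (Finset.mem_product.mpr ⟨hx, Finset.mem_univ _⟩)
    (Prod.le_def.mpr ⟨by rw [hσ2b]; exact hc.1, by rw [hσ2b, hbdb]; exact Bool.false_le _⟩)
  have hρw₂' : ρA w₂ = ρR x + 1 := by simpa using hρw₂
  have hw₂A2 : w₂ ∈ A2 := by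
    refine Finset.mem_filter.mpr ⟨hw₂Γ, hbw₂, ?_⟩
    rw [hσw₂]
  obtain ⟨wB, hwB, hbwB, hρwB, hσwB⟩ := hSFSB.2.2.2.2.1 b hbB x hx hc.1
  have hσwB' : (σ₁ wB).1 = x := hσwB
  have hwBAB : wB ∈ AB := Finset.mem_filter.mpr ⟨hwB, hbwB, le_of_eq hσwB'⟩
  -- sups
  have hsupA1 : A1.sup ρA = ρR x + 1 :=
    le_antisymm (Finset.sup_le hbA1) (hρw₁' ▸ Finset.le_sup hw₁A1)
  have hsupA2 : A2.sup ρA = ρR x + 1 :=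
    le_antisymm (Finset.sup_le hbA2) (hρw₂' ▸ Finset.le_sup hw₂A2)
  have hsupAB : AB.sup ρA = ρR x :=
    le_antisymm (Finset.sup_le hbAB) (hρwB ▸ Finset.le_sup hwBAB)
  have hbF : ∀ y ∈ F, ρA y ≤ ρR x + 1 := by
    intro y hy
    rw [hf3] at hy
    rcases Finset.mem_union.mp hy with h | h
    · exact hbA1 y h
    · exact hbA2 y h
  have hw₁F : w₁ ∈ F := by
    rw [hf3]; exact Finset.mem_union_left _ hw₁A1
  have hsupF : F.sup ρA = ρR x + 1 :=
    le_antisymm (Finset.sup_le hbF) (hρw₁' ▸ Finset.le_sup hw₁F)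
  -- h-polynomial decomposition
  have hsum3 : (∑ y ∈ F, G b y * (Polynomial.X - 1) ^ (ρR x + 1 - ρA y))
      + (∑ y ∈ AB, G b y * (Polynomial.X - 1) ^ (ρR x + 1 - ρA y))
      = (∑ y ∈ A1, G b y * (Polynomial.X - 1) ^ (ρR x + 1 - ρA y))
        + (∑ y ∈ A2, G b y * (Polynomial.X - 1) ^ (ρR x + 1 - ρA y)) := by
    rw [hf3, ← hf4]
    exact Finset.sum_union_inter
  have hABfact : (∑ y ∈ AB, G b y * (Polynomial.X - 1) ^ (ρR x + 1 - ρA y))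
      = (Polynomial.X - 1) * (∑ y ∈ AB, G b y * (Polynomial.X - 1) ^ (ρR x - ρA y)) := by
    rw [Finset.mul_sum]
    refine Finset.sum_congr rfl fun y hy => ?_
    have h1 := hbAB y hy
    have he : ρR x + 1 - ρA y = (ρR x - ρA y) + 1 := by omega
    rw [he, pow_succ]; ring
  have hdegAB : (∑ y ∈ AB, G b y * (Polynomial.X - 1) ^ (ρR x - ρA y)).natDegree
      ≤ ρR x - ρA b := by
    refine Polynomial.natDegree_sum_le_of_forall_le _ _ fun y hy => ?_
    have h1 := hbAB y hy
    have h2 := hABρb y hy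
    have hdg : (G b y).natDegree ≤ ρA y - ρA b := by
      rcases eq_or_ne y b with rfl | hne
      · rw [hG.1 y (Finset.mem_union_left _ hbΓ₁)]; simp
      · have hby : b ≤ y := (Finset.mem_filter.mp hy).2.1
        have hyU : y ∈ Γ₁ ∪ Γ₂ :=
          Finset.mem_union_left _ (Finset.mem_inter.mp (Finset.mem_filter.mp hy).1).1
        have := (hG.2 b (Finset.mem_union_left _ hbΓ₁) y hyU
          (lt_of_le_of_ne hby (Ne.symm hne))).1
        omega
    calc (G b y * (Polynomial.X - 1) ^ (ρR x - ρA y)).natDegree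
        ≤ (G b y).natDegree + ((Polynomial.X - 1 : Polynomial ℤ) ^ (ρR x - ρA y)).natDegree :=
          Polynomial.natDegree_mul_le
      _ ≤ (ρA y - ρA b) + (ρR x - ρA y) := by
          refine add_le_add hdg (le_trans Polynomial.natDegree_pow_le ?_)
          rw [natDegree_X_sub_one, mul_one]
      _ ≤ ρR x - ρA b := by omega
  have hdecomp : hPoly ρA G F b = hPoly ρA G A1 b + hPoly ρA G A2 b
      + (Polynomial.X - 1) * hPoly ρA G AB b := by
    simp only [hPoly]
    rw [hsupF, hsupA1, hsupA2, hsupAB]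
    have hSF := eq_sub_of_add_eq hsum3
    rw [hSF, Polynomial.reflect_sub, Polynomial.reflect_add]
    have hre : Polynomial.reflect (ρR x + 1 - ρA b)
        (∑ y ∈ AB, G b y * (Polynomial.X - 1) ^ (ρR x + 1 - ρA y))
        = (1 - Polynomial.X) * Polynomial.reflect (ρR x - ρA b)
            (∑ y ∈ AB, G b y * (Polynomial.X - 1) ^ (ρR x - ρA y)) := by
      rw [hABfact]
      have hsplit : ρR x + 1 - ρA b = 1 + (ρR x - ρA b) := by omega
      rw [hsplit, Polynomial.reflect_mul _ _ (le_of_eq natDegree_X_sub_one) hdegAB,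
        reflect_one_X_sub_one]
    rw [hre]; ring
  -- finish
  rw [eB1, eB2, (hkey x hx hc.2).1, (hkey x hx hc.2).2, hdecomp]
  have hs : ρR t₀ + 1 - ρR x = (ρR t₀ - ρR x) + 1 := by
    have := hmleR x hx t₀ ht₀ hc.2
    omega
  rw [hs]
  ring


end
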